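/- Let G_1 and G_2 be equitable Hamiltonian-laceable bipartite graphs with the same number of vertices, and let G be a bipartite weld of G_1 and G_2. Then G is Hamiltonian-laceable. -/

import Mathlib

open Finset

/-- A paired `k`-PDPC of `G` with prescribed endpoints `s i`, `t i`. -/
def IsPDPC {V : Type} [Fintype V] (G : SimpleGraph V) {k : ℕ} (s t : Fin k → V) : Prop :=
  ∃ P : (i : Fin k) → G.Walk (s i) (t i),
    (∀ i, (P i).IsPath) ∧
    (∀ i j, i ≠ j → ∀ v, v ∈ (P i).support → v ∉ (P j).support) ∧
    (∀ v : V, ∃ i, v ∈ (P i).support)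

/-- `V1, V2` form a bipartition of `G` into partite sets. -/
def IsBipartition {V : Type} (G : SimpleGraph V) (V1 V2 : Finset V) : Prop :=
  (∀ v, v ∈ V1 ∨ v ∈ V2) ∧ (∀ v, ¬(v ∈ V1 ∧ v ∈ V2)) ∧
  (∀ ⦃u v⦄, G.Adj u v → (u ∈ V1 ∧ v ∈ V2) ∨ (u ∈ V2 ∧ v ∈ V1))

/-- `G` on `Fin ℓ × W` is a weld of the graphs `Gs i`: each layer `i` is a copy of `Gs i`
and between any two distinct layers the edges of `G` form a perfect matching. -/
def IsWeld {ℓ : ℕ} {W : Type} (G : SimpleGraph (Fin ℓ × W)) (Gs : Fin ℓ → SimpleGraph W) : Prop :=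
  (∀ i u v, G.Adj (i, u) (i, v) ↔ (Gs i).Adj u v) ∧
  (∀ i j, i ≠ j → ∃ f : W ≃ W, ∀ u v, G.Adj (i, u) (j, v) ↔ v = f u)

/-- `p` is a Hamiltonian path. -/
def IsHamPath {V : Type} {G : SimpleGraph V} {u v : V} (p : G.Walk u v) : Prop :=
  p.IsPath ∧ ∀ w : V, w ∈ p.support

/-- `G` is Hamiltonian-connected. -/
def HamConnected {V : Type} (G : SimpleGraph V) : Prop :=
  ∀ u v : V, u ≠ v → ∃ p : G.Walk u v, IsHamPath p

/-- `G` is Hamiltonian-laceable with partite sets `V1, V2`. -/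
def HamLaceableOn {V : Type} (G : SimpleGraph V) (V1 V2 : Finset V) : Prop :=
  IsBipartition G V1 V2 ∧ ∀ u ∈ V1, ∀ v ∈ V2, ∃ p : G.Walk u v, IsHamPath p

/-- `G` is Hamiltonian-laceable. -/
def HamLaceable {V : Type} (G : SimpleGraph V) : Prop :=
  ∃ V1 V2 : Finset V, HamLaceableOn G V1 V2

open SimpleGraph

private lemma bip_parity {V : Type} {H : SimpleGraph V} {PA PB : V → Prop}
    (hd : ∀ v, ¬(PA v ∧ PB v))
    (hcross : ∀ ⦃a b⦄, H.Adj a b → (PA a ∧ PB b) ∨ (PB a ∧ PA b)) :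
    ∀ {x y : V} (p : H.Walk x y), ((PA x ↔ PA y) ↔ Even p.length) := by
  intro x y p
  induction p with
  | nil => simp
  | cons h q ih =>
    rename_i x w y
    have hxw : ¬(PA x ↔ PA w) := by
      rcases hcross h with ⟨h1, h2⟩ | ⟨h1, h2⟩
      · exact fun hiff => hd w ⟨hiff.mp h1, h2⟩
      · exact fun hiff => hd x ⟨hiff.mpr h2, h1⟩
    simp only [Walk.length_cons, Nat.even_add_one]
    tauto

private lemma pre_of_ham {V : Type} [DecidableEq V] {H : SimpleGraph V} {u v : V}
    (p : H.Walk u v) (hp : ∀ w, w ∈ p.support) : H.Preconnected := fun a b =>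
  ((p.takeUntil a (hp a)).reverse.append (p.takeUntil b (hp b))).reachable

@[reducible] private def layerHom {W : Type} (Gs : Fin 2 → SimpleGraph W) (G : SimpleGraph (Fin 2 × W))
    (h : ∀ i u v, G.Adj (i, u) (i, v) ↔ (Gs i).Adj u v) (i : Fin 2) : Gs i →g G :=
  ⟨fun w => (i,w), fun {a b} hh => (h i a b).mpr hh⟩

@[simp] private lemma layerHom_apply {W : Type} (Gs : Fin 2 → SimpleGraph W)
    (G : SimpleGraph (Fin 2 × W)) (h : ∀ i u v, G.Adj (i, u) (i, v) ↔ (Gs i).Adj u v)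
    (i : Fin 2) (w : W) : layerHom Gs G h i w = (i, w) := rfl

private lemma fin2_two : ∀ i j : Fin 2, i ≠ j → ∀ m : Fin 2, m = i ∨ m = j := by decide

private lemma fin2_all : ∀ i : Fin 2, ∃ k : Fin 2, k ≠ i ∧ ∀ m : Fin 2, m = i ∨ m = k := by
  decide

theorem stmt9 {W : Type} [Fintype W] [DecidableEq W] (Gs : Fin 2 → SimpleGraph W)
    (hlace : ∀ i, ∃ A B : Finset W, HamLaceableOn (Gs i) A B ∧ A.card = B.card)
    (G : SimpleGraph (Fin 2 × W)) (hweld : IsWeld G Gs)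
    (hbip : ∃ V1 V2 : Finset (Fin 2 × W), IsBipartition G V1 V2) :
    HamLaceable G := by
  obtain ⟨V1, V2, hb⟩ := hbip
  refine ⟨V1, V2, hb, ?_⟩
  intro u hu v hv
  have hWne : Nonempty W := ⟨u.2⟩
  choose A B hAB hcard using hlace
  have hBne : ∀ i, (B i).Nonempty := by
    intro i
    rcases Finset.eq_empty_or_nonempty (B i) with hB | hB
    · exfalso
      have hA : A i = ∅ := Finset.card_eq_zero.mp (by rw [hcard i, hB]; simp)
      obtain ⟨w⟩ := hWne
      rcases (hAB i).1.1 w with h | h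
      · simp [hA] at h
      · simp [hB] at h
    · exact hB
  have hAne : ∀ i, (A i).Nonempty := by
    intro i
    rw [← Finset.card_pos, hcard i, Finset.card_pos]
    exact hBne i
  have hconn : ∀ i, (Gs i).Preconnected := by
    intro i
    obtain ⟨a, ha⟩ := hAne i
    obtain ⟨b, hbB⟩ := hBne i
    obtain ⟨p, hp⟩ := (hAB i).2 a ha b hbB
    exact pre_of_ham p hp.2
  have key : ∀ i (x y : W), (((i,x) ∈ V1 ↔ (i,y) ∈ V1) ↔ (x ∈ A i ↔ y ∈ A i)) := by
    intro i x y
    obtain ⟨p⟩ := hconn i x y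
    have h1 := bip_parity (PA := fun w => (i,w) ∈ V1) (PB := fun w => (i,w) ∈ V2)
      (fun w => hb.2.1 (i,w)) (fun a b h => hb.2.2 ((hweld.1 i a b).mpr h)) p
    have h2 := bip_parity (PA := fun w => w ∈ A i) (PB := fun w => w ∈ B i)
      (hAB i).1.2.1 (hAB i).1.2.2 p
    exact h1.trans h2.symm
  have lace : ∀ i (x y : W), ¬((i,x) ∈ V1 ↔ (i,y) ∈ V1) →
      ∃ p : (Gs i).Walk x y, IsHamPath p := by
    intro i x y h
    rw [key i x y] at h
    by_cases hx : x ∈ A i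
    · have hy : y ∈ B i := by
        have hy' : y ∉ A i := fun hyA => h ⟨fun _ => hyA, fun _ => hx⟩
        rcases (hAB i).1.1 y with h' | h'
        · exact absurd h' hy'
        · exact h'
      exact (hAB i).2 x hx y hy
    · have hxB : x ∈ B i := by
        rcases (hAB i).1.1 x with h' | h'
        · exact absurd h' hx
        · exact h'
      have hy : y ∈ A i := by tauto
      obtain ⟨p, hp⟩ := (hAB i).2 y hy x hxB
      exact ⟨p.reverse, hp.1.reverse, fun w => by rw [Walk.support_reverse]; simpa using hp.2 w⟩
  have opp : ∀ i (x : W), ∃ y, ¬((i,x) ∈ V1 ↔ (i,y) ∈ V1) := by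
    intro i x
    by_cases hx : x ∈ A i
    · obtain ⟨y, hy⟩ := hBne i
      have hy' : y ∉ A i := fun hyA => (hAB i).1.2.1 y ⟨hyA, hy⟩
      exact ⟨y, by rw [key i x y]; tauto⟩
    · obtain ⟨y, hy⟩ := hAne i
      exact ⟨y, by rw [key i x y]; tauto⟩
  have hadjopp : ∀ ⦃p q : Fin 2 × W⦄, G.Adj p q → ¬(p ∈ V1 ↔ q ∈ V1) := by
    intro p q h hiff
    rcases hb.2.2 h with ⟨h1, h2⟩ | ⟨h1, h2⟩
    · exact hb.2.1 q ⟨hiff.mp h1, h2⟩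
    · exact hb.2.1 p ⟨hiff.mpr h2, h1⟩
  set φ : ∀ i, Gs i →g G := layerHom Gs G hweld.1 with hφ
  have hinj : ∀ i : Fin 2, Function.Injective (fun w : W => ((i,w) : Fin 2 × W)) :=
    fun i x y h => congrArg Prod.snd h
  obtain ⟨i, a⟩ := u
  obtain ⟨j, b⟩ := v
  have huv : ¬((i,a) ∈ V1 ↔ (j,b) ∈ V1) := fun hiff => hb.2.1 (j,b) ⟨hiff.mp hu, hv⟩
  by_cases hij : i = j
  · subst hij
    obtain ⟨k, hki, hall⟩ := fin2_all i
    obtain ⟨f, hf⟩ := hweld.2 i k (Ne.symm hki)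
    obtain ⟨p, hp⟩ := lace i a b huv
    have hab : a ≠ b := by rintro rfl; exact huv Iff.rfl
    cases p with
    | nil => exact absurd rfl hab
    | cons h q =>
      rename_i c
      have e1 : G.Adj (i,a) (k, f a) := (hf a (f a)).mpr rfl
      have e2 : G.Adj (k, f c) (i, c) := ((hf c (f c)).mpr rfl).symm
      have hopp' : ¬((k, f a) ∈ V1 ↔ (k, f c) ∈ V1) := by
        have o1 := hadjopp e1
        have o2 := hadjopp ((hweld.1 i a c).mpr h)
        have o3 := hadjopp ((hf c (f c)).mpr rfl)
        tauto
      obtain ⟨q', hq'⟩ := lace k (f a) (f c) hopp'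
      have hsup : (Walk.cons e1 ((q'.map (φ k)).append (Walk.cons e2 (q.map (φ i))))).support
          = (i,a) :: (q'.support.map (fun w => (k,w)) ++ q.support.map (fun w => (i,w))) := by
        simp only [Walk.support_cons, Walk.support_append, Walk.support_map, List.tail_cons, hφ]
        rfl
      have hqnd : q.support.Nodup ∧ a ∉ q.support := by
        have := hp.1.support_nodup
        rw [Walk.support_cons, List.nodup_cons] at this
        exact ⟨this.2, this.1⟩
      refine ⟨Walk.cons e1 ((q'.map (φ k)).append (Walk.cons e2 (q.map (φ i)))), ?_, ?_⟩
      · rw [Walk.isPath_def, hsup, List.nodup_cons, List.nodup_append]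
        refine ⟨?_, hq'.1.support_nodup.map (hinj k), hqnd.1.map (hinj i), ?_⟩
        · intro hmem
          rcases List.mem_append.mp hmem with hm | hm
          · obtain ⟨w1, _, hw⟩ := List.mem_map.mp hm
            exact hki (congrArg Prod.fst hw)
          · obtain ⟨w1, hw1, hw⟩ := List.mem_map.mp hm
            have hwa : w1 = a := congrArg Prod.snd hw
            exact hqnd.2 (hwa ▸ hw1)
        · intro z hz1 z' hz2 hzz
          obtain ⟨w1, _, hw1⟩ := List.mem_map.mp hz1
          obtain ⟨w2, _, hw2⟩ := List.mem_map.mp hz2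
          exact hki (congrArg Prod.fst (hw1.trans (hzz.trans hw2.symm)))
      · rintro ⟨m, w⟩
        rw [hsup]
        rcases hall m with rfl | rfl
        · have := hp.2 w
          rw [Walk.support_cons, List.mem_cons] at this
          rcases this with rfl | hw
          · exact List.mem_cons_self
          · exact List.mem_cons_of_mem _ (List.mem_append.mpr (Or.inr
              (List.mem_map.mpr ⟨w, hw, rfl⟩)))
        · exact List.mem_cons_of_mem _ (List.mem_append.mpr (Or.inl
            (List.mem_map.mpr ⟨w, hq'.2 w, rfl⟩)))
  · obtain ⟨f, hf⟩ := hweld.2 i j hij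
    obtain ⟨x, hx⟩ := opp i a
    obtain ⟨p, hp⟩ := lace i a x hx
    have e1 : G.Adj (i,x) (j, f x) := (hf x (f x)).mpr rfl
    have hopp' : ¬((j, f x) ∈ V1 ↔ (j, b) ∈ V1) := by
      have o1 := hadjopp e1
      tauto
    obtain ⟨q, hq⟩ := lace j (f x) b hopp'
    have hsup : ((p.map (φ i)).append (Walk.cons e1 (q.map (φ j)))).support
        = p.support.map (fun w => (i,w)) ++ q.support.map (fun w => (j,w)) := by
      simp only [Walk.support_cons, Walk.support_append, Walk.support_map, List.tail_cons, hφ]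
      rfl
    refine ⟨(p.map (φ i)).append (Walk.cons e1 (q.map (φ j))), ?_, ?_⟩
    · rw [Walk.isPath_def, hsup, List.nodup_append]
      refine ⟨hp.1.support_nodup.map (hinj i), hq.1.support_nodup.map (hinj j), ?_⟩
      intro z hz1 z' hz2 hzz
      obtain ⟨w1, _, hw1⟩ := List.mem_map.mp hz1
      obtain ⟨w2, _, hw2⟩ := List.mem_map.mp hz2
      exact hij (congrArg Prod.fst (hw1.trans (hzz.trans hw2.symm)))
    · rintro ⟨m, w⟩
      rw [hsup, List.mem_append]
      rcases fin2_two i j hij m with rfl | rfl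
      · exact Or.inl (List.mem_map.mpr ⟨w, hp.2 w, rfl⟩)
      · exact Or.inr (List.mem_map.mpr ⟨w, hq.2 w, rfl⟩)
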